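/- Let Ψ : [0,∞) → ℝ satisfy the ODE Ψ'(x) = exp(−3 Ψ(x)²) with Ψ(0) = 0. Then for all x ≥ e, √(log(√3·x)/3) − 1/√3 ≤ Ψ(x) ≤ √(log(√3·x)/3) + 1/√3. -/

import Mathlib

set_option maxHeartbeats 1000000

open Real MeasureTheory

noncomputable def Fint (y : ℝ) : ℝ := ∫ t in (0:ℝ)..y, Real.exp (3 * t ^ 2)

lemma contF : Continuous (fun t : ℝ => Real.exp (3 * t ^ 2)) := by continuity

lemma hFderiv (y : ℝ) : HasDerivAt Fint (Real.exp (3 * y ^ 2)) y :=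
  (contF.integral_hasStrictDerivAt 0 y).hasDerivAt

lemma Fmono : StrictMono Fint :=
  strictMono_of_hasDerivAt_pos hFderiv (fun y => Real.exp_pos _)

lemma Fzero : Fint 0 = 0 := intervalIntegral.integral_same

lemma F_upper (L : ℝ) (hL : 0 < L) :
    Fint L ≤ (Real.exp (3*L^2) - 1)/(3*L) := by
  have hcont2 : Continuous fun t : ℝ => Real.exp (3*L*t) := by continuity
  have h1 : Fint L ≤ ∫ t in (0:ℝ)..L, Real.exp (3*L*t) := by
    apply intervalIntegral.integral_mono_on hL.le (contF.intervalIntegrable 0 L)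
      (hcont2.intervalIntegrable 0 L)
    intro t ht
    apply Real.exp_le_exp.2
    nlinarith [ht.1, ht.2, mul_nonneg ht.1 (sub_nonneg.2 ht.2)]
  have h2 : (∫ t in (0:ℝ)..L, Real.exp (3*L*t)) = (Real.exp (3*L^2) - 1)/(3*L) := by
    have hD : ∀ t ∈ Set.uIcc (0:ℝ) L,
        HasDerivAt (fun t => Real.exp (3*L*t)/(3*L)) (Real.exp (3*L*t)) t := by
      intro t _
      have h := (((hasDerivAt_id t).const_mul (3*L)).exp).div_const (3*L)
      refine h.congr_deriv ?_
      field_simp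
      rfl
    rw [intervalIntegral.integral_eq_sub_of_hasDerivAt hD (hcont2.intervalIntegrable 0 L)]
    rw [mul_zero, Real.exp_zero, show 3*L*L = 3*L^2 by ring]
    ring
  linarith

lemma F_lower (U : ℝ) (hU : 0 < U) :
    (Real.exp (3*U^2) - Real.exp (-(3*U^2)))/(6*U) ≤ Fint U := by
  have hcont2 : Continuous fun t : ℝ => Real.exp (6*U*t - 3*U^2) := by continuity
  have h1 : (∫ t in (0:ℝ)..U, Real.exp (6*U*t - 3*U^2)) ≤ Fint U := by
    apply intervalIntegral.integral_mono_on hU.le (hcont2.intervalIntegrable 0 U)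
      (contF.intervalIntegrable 0 U)
    intro t ht
    apply Real.exp_le_exp.2
    nlinarith [sq_nonneg (t - U)]
  have h2 : (∫ t in (0:ℝ)..U, Real.exp (6*U*t - 3*U^2))
      = (Real.exp (3*U^2) - Real.exp (-(3*U^2)))/(6*U) := by
    have hD : ∀ t ∈ Set.uIcc (0:ℝ) U,
        HasDerivAt (fun t => Real.exp (6*U*t - 3*U^2)/(6*U)) (Real.exp (6*U*t - 3*U^2)) t := by
      intro t _
      have h := ((((hasDerivAt_id t).const_mul (6*U)).sub_const (3*U^2)).exp).div_const (6*U)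
      refine h.congr_deriv ?_
      field_simp
      rfl
    rw [intervalIntegral.integral_eq_sub_of_hasDerivAt hD (hcont2.intervalIntegrable 0 U)]
    rw [mul_zero, show 6*U*U - 3*U^2 = 3*U^2 by ring, show (0:ℝ) - 3*U^2 = -(3*U^2) by ring]
    ring
  linarith

lemma keyA (u : ℝ) (hu : 0 ≤ u) : Real.exp (u^2) - 1 ≤ u * Real.exp ((u+1)^2) := by
  have h1 : 1 - u^2 ≤ Real.exp (-(u^2)) := by linarith [Real.add_one_le_exp (-(u^2))]
  have hmul : Real.exp (u^2) * Real.exp (-(u^2)) = 1 := by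
    rw [← Real.exp_add]; simp
  have h2 : Real.exp (u^2) - 1 ≤ u^2 * Real.exp (u^2) := by
    nlinarith [Real.exp_pos (u^2)]
  have h3 : u ≤ Real.exp (2*u+1) := by nlinarith [Real.add_one_le_exp (2*u+1)]
  have h4 : Real.exp ((u+1)^2) = Real.exp (u^2) * Real.exp (2*u+1) := by
    rw [← Real.exp_add]; ring_nf
  nlinarith [mul_le_mul_of_nonneg_left h3 (mul_nonneg hu (Real.exp_pos (u^2)).le),
    Real.exp_pos (u^2)]

lemma keyB (u : ℝ) (hu : 0 ≤ u) :
    2*(u+2) * Real.exp ((u+1)^2) ≤ Real.exp ((u+2)^2) - Real.exp (-((u+2)^2)) := by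
  have h1 : Real.exp ((u+2)^2) = Real.exp ((u+1)^2) * Real.exp (2*u+3) := by
    rw [← Real.exp_add]; ring_nf
  have he : (2.7182818283 : ℝ) < Real.exp 1 := Real.exp_one_gt_d9
  have h2 : (7:ℝ) ≤ Real.exp 2 := by
    have : Real.exp 2 = Real.exp 1 * Real.exp 1 := by rw [← Real.exp_add]; norm_num
    nlinarith
  have h3 : 2*u+2 ≤ Real.exp (2*u+1) := by nlinarith [Real.add_one_le_exp (2*u+1)]
  have h4 : Real.exp (2*u+3) = Real.exp 2 * Real.exp (2*u+1) := by
    rw [← Real.exp_add]; ring_nf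
  have h5 : Real.exp (-((u+2)^2)) ≤ 1 := Real.exp_le_one_iff.2 (by nlinarith)
  have h6 : 1 ≤ Real.exp ((u+1)^2) := Real.one_le_exp (by positivity)
  have h7 : (2*u+5) ≤ Real.exp (2*u+3) := by nlinarith [Real.exp_pos (2*u+1)]
  nlinarith [mul_le_mul_of_nonneg_left h7 (le_trans zero_le_one h6)]

lemma Fpsi (Ψ : ℝ → ℝ)
    (hΨ : ∀ x : ℝ, 0 ≤ x → HasDerivAt Ψ (Real.exp (-3 * Ψ x ^ 2)) x)
    (hΨ0 : Ψ 0 = 0) (x : ℝ) (hx : 0 ≤ x) : Fint (Ψ x) = x := by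
  have hg : ∀ y, 0 ≤ y → HasDerivAt (fun z => Fint (Ψ z) - z) 0 y := by
    intro y hy
    have h1 := ((hFderiv (Ψ y)).comp y (hΨ y hy)).sub (hasDerivAt_id y)
    refine h1.congr_deriv ?_
    rw [← Real.exp_add, show 3 * Ψ y ^ 2 + -3 * Ψ y ^ 2 = 0 by ring, Real.exp_zero]
    ring
  have hconst := constant_of_has_deriv_right_zero
    (f := fun z => Fint (Ψ z) - z) (a := 0) (b := x)
    (fun y hy => ((hg y hy.1).continuousAt.continuousWithinAt))
    (fun y hy => (hg y hy.1).hasDerivWithinAt)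
  have hx' := hconst x ⟨hx, le_rfl⟩
  simp only [hΨ0, Fzero] at hx'
  linarith [hx']

theorem stmt_1 (Ψ : ℝ → ℝ)
    (hΨ : ∀ x : ℝ, 0 ≤ x → HasDerivAt Ψ (Real.exp (-3 * Ψ x ^ 2)) x)
    (hΨ0 : Ψ 0 = 0) :
    ∀ x : ℝ, Real.exp 1 ≤ x →
      Real.sqrt (Real.log (Real.sqrt 3 * x) / 3) - 1 / Real.sqrt 3 ≤ Ψ x ∧
        Ψ x ≤ Real.sqrt (Real.log (Real.sqrt 3 * x) / 3) + 1 / Real.sqrt 3 := by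
  intro x hx
  have hx0 : (0:ℝ) < x := lt_of_lt_of_le (Real.exp_pos 1) hx
  have hFx : Fint (Ψ x) = x := Fpsi Ψ hΨ hΨ0 x hx0.le
  have h3pos : (0:ℝ) < Real.sqrt 3 := Real.sqrt_pos.2 (by norm_num)
  have h3ne : Real.sqrt 3 ≠ 0 := ne_of_gt h3pos
  have hsq3 : Real.sqrt 3 ^ 2 = 3 := Real.sq_sqrt (by norm_num)
  have h13 : (1:ℝ) ≤ Real.sqrt 3 := by nlinarith
  set A : ℝ := Real.sqrt 3 * x with hA_def
  have hApos : 0 < A := by positivity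
  have hA1 : Real.exp 1 ≤ A := by nlinarith
  have hlogA : 1 ≤ Real.log A := by
    rw [← Real.log_exp 1]
    exact Real.log_le_log (Real.exp_pos 1) hA1
  set s : ℝ := Real.sqrt (Real.log A / 3) with hs_def
  have hs0 : 0 ≤ s := Real.sqrt_nonneg _
  have hs3 : 3 * s^2 = Real.log A := by
    rw [hs_def, Real.sq_sqrt (by linarith : (0:ℝ) ≤ Real.log A / 3)]
    ring
  have hexp_s : Real.exp (3*s^2) = A := by rw [hs3, Real.exp_log hApos]
  set u : ℝ := Real.sqrt 3 * s - 1 with hu_def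
  have hu0 : 0 ≤ u := by nlinarith
  have hsu : Real.sqrt 3 * s = u + 1 := by rw [hu_def]; ring
  have h3s2 : 3 * s^2 = (u+1)^2 := by nlinarith
  have hexpA : Real.exp ((u+1)^2) = A := by rw [← h3s2]; exact hexp_s
  set L : ℝ := s - 1 / Real.sqrt 3 with hL_def
  set U : ℝ := s + 1 / Real.sqrt 3 with hU_def
  have hLu : Real.sqrt 3 * L = u := by
    rw [hL_def, mul_sub, mul_one_div, div_self h3ne, hsu]; ring
  have hUu : Real.sqrt 3 * U = u + 2 := by
    rw [hU_def, mul_add, mul_one_div, div_self h3ne, hsu]; ring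
  have h3L2 : 3 * L^2 = u^2 := by rw [← hLu, mul_pow, hsq3]
  have h3U2 : 3 * U^2 = (u+2)^2 := by rw [← hUu, mul_pow, hsq3]
  have hUpos : 0 < U := by nlinarith
  constructor
  · -- lower bound
    rcases le_or_gt L 0 with hL0 | hL0
    · have hpsi_pos : 0 < Ψ x := by
        have : Fint 0 < Fint (Ψ x) := by rw [Fzero, hFx]; exact hx0
        exact Fmono.lt_iff_lt.1 this
      linarith
    · have hFL : Fint L ≤ (Real.exp (3*L^2) - 1)/(3*L) := F_upper L hL0
      have hkey : Real.exp (3*L^2) - 1 ≤ x * (3*L) := by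
        have h1 := keyA u hu0
        have h2 : x * (3*L) = u * Real.exp ((u+1)^2) := by
          rw [hexpA]
          simp only [hA_def]
          linear_combination (Real.sqrt 3 * x) * hLu - x * L * hsq3
        rw [h3L2, h2]
        exact h1
      have hFLx : Fint L ≤ x := by
        have := (div_le_iff₀ (by positivity : (0:ℝ) < 3*L)).2 hkey
        linarith
      have : Fint L ≤ Fint (Ψ x) := by rw [hFx]; exact hFLx
      exact Fmono.le_iff_le.1 this
  · -- upper bound
    have hFU : (Real.exp (3*U^2) - Real.exp (-(3*U^2)))/(6*U) ≤ Fint U := F_lower U hUpos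
    have hkey : x * (6*U) ≤ Real.exp (3*U^2) - Real.exp (-(3*U^2)) := by
      have h1 := keyB u hu0
      have h2 : x * (6*U) = 2*(u+2) * Real.exp ((u+1)^2) := by
        rw [hexpA]
        simp only [hA_def]
        linear_combination (2 * Real.sqrt 3 * x) * hUu - 2 * x * U * hsq3
      rw [h3U2, h2]
      exact h1
    have hxFU : x ≤ Fint U := by
      have := (le_div_iff₀ (by positivity : (0:ℝ) < 6*U)).2 hkey
      linarith
    have : Fint (Ψ x) ≤ Fint U := by rw [hFx]; exact hxFU
    exact Fmono.le_iff_le.1 this
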